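/- arXiv:1101.3534 — 7 statements merged into one kernel-verified Lean document; each statement's English description precedes it below -/
import Mathlib

section
/- Let $\mu \in \mathbb{R}$ and let $\beta \in C[0,1]$ with $\beta \neq 0$. Define $B_0 := \{x \in [0,1] : \beta(x) = 0\}$ and $A_2 := \{\zeta \in L^2[0,1] : \zeta(x) + \mu \neq 0 \text{ for a.e. } x \in [0,1]\setminus B_0\}$. Then the algebraic interior (core) of $A_2$ in $L^2[0,1]$ is empty. -/
open MeasureTheory
open scoped ENNReal

local notation "ν" => MeasureTheory.volume.restrict (Set.Icc (0:ℝ) 1)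

theorem stmt_2 (μ : ℝ) (β : ℝ → ℝ)
    (hβC : ContinuousOn β (Set.Icc 0 1))
    (hβne : ∃ x ∈ Set.Icc (0:ℝ) 1, β x ≠ 0)
    (B₀ : Set ℝ) (hB₀ : B₀ = {x ∈ Set.Icc (0:ℝ) 1 | β x = 0})
    (A₂ : Set (Lp ℝ 2 (volume.restrict (Set.Icc (0:ℝ) 1))))
    (hA₂ : ∀ ζ : Lp ℝ 2 (volume.restrict (Set.Icc (0:ℝ) 1)),
      ζ ∈ A₂ ↔ ∀ᵐ x ∂(volume.restrict (Set.Icc (0:ℝ) 1)),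
        x ∉ B₀ → (ζ : ℝ → ℝ) x + μ ≠ 0) :
    {ζ₀ ∈ A₂ | ∀ u : Lp ℝ 2 (volume.restrict (Set.Icc (0:ℝ) 1)),
      ∃ δ > 0, ∀ t ∈ Set.Icc (0:ℝ) δ, ζ₀ + t • u ∈ A₂} = ∅ := by
  rw [Set.eq_empty_iff_forall_notMem]
  rintro ζ₀ ⟨hζ₀, hcore⟩
  -- Step B : a subinterval [c,d] of [0,1] on which β never vanishes
  obtain ⟨x₀, hx₀, hβx₀⟩ := hβne
  have hcw : ContinuousWithinAt β (Set.Icc 0 1) x₀ := hβC x₀ hx₀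
  have hev : ∀ᶠ y in nhdsWithin x₀ (Set.Icc 0 1), β y ≠ 0 := hcw.eventually_ne hβx₀
  rw [eventually_nhdsWithin_iff] at hev
  obtain ⟨ε, hε, hball⟩ := Metric.eventually_nhds_iff.1 hev
  set c := max 0 (x₀ - ε/2) with hcdef
  set d := min 1 (x₀ + ε/2) with hddef
  have hc0 : (0:ℝ) ≤ c := le_max_left _ _
  have hd1 : d ≤ 1 := min_le_left _ _
  have hcx : c ≤ x₀ := max_le hx₀.1 (by linarith)
  have hcd : c < d := by
    rcases le_or_gt (x₀ + ε/2) 1 with h | h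
    · have hd : d = x₀ + ε/2 := min_eq_right h
      linarith
    · have hd : d = 1 := min_eq_left h.le
      have h1 : x₀ - ε/2 < 1 := by have := hx₀.2; linarith
      have : c < 1 := max_lt one_pos h1
      linarith
  have hsub : Set.Icc c d ⊆ Set.Icc (0:ℝ) 1 := fun x hx => ⟨hc0.trans hx.1, hx.2.trans hd1⟩
  have hβnez : ∀ x ∈ Set.Icc c d, β x ≠ 0 := by
    intro x hx
    refine hball ?_ (hsub hx)
    rw [Real.dist_eq, abs_lt]
    have h1 : x₀ - ε/2 ≤ c := le_max_right _ _
    have h2 : d ≤ x₀ + ε/2 := min_le_right _ _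
    have := hx.1; have := hx.2
    constructor <;> linarith
  -- Step C : the function g = ζ₀ + μ
  have hgsm : StronglyMeasurable (ζ₀ : ℝ → ℝ) := Lp.stronglyMeasurable ζ₀
  set g : ℝ → ℝ := fun x => (ζ₀ : ℝ → ℝ) x + μ with hgdef
  have hgm : Measurable g := hgsm.measurable.add_const μ
  -- ν of Icc c d
  have hνIcc : ν (Set.Icc c d) = ENNReal.ofReal (d - c) := by
    rw [Measure.restrict_apply' measurableSet_Icc, Set.inter_eq_left.2 hsub,
      Real.volume_Icc]
  -- Step D : find M with the truncated set of positive measure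
  set A : ℕ → Set ℝ := fun n => {x ∈ Set.Icc c d | (n:ℝ) < |g x|} with hAdef
  have hAmeas : ∀ n, MeasurableSet (A n) := fun n =>
    measurableSet_Icc.inter (measurableSet_lt measurable_const hgm.abs)
  have hAanti : Antitone A := by
    intro n m hnm x hx
    exact ⟨hx.1, lt_of_le_of_lt (by exact_mod_cast Nat.cast_le.2 hnm) hx.2⟩
  have hAempty : ⋂ n, A n = ∅ := by
    ext x
    simp only [Set.mem_iInter, Set.mem_empty_iff_false, iff_false, not_forall]
    obtain ⟨n, hn⟩ := exists_nat_gt |g x|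
    exact ⟨n, fun hx => absurd hx.2 (not_lt.2 hn.le)⟩
  have hAfin : ν (A 0) ≠ ⊤ := by
    refine ne_of_lt (lt_of_le_of_lt (measure_mono (fun x hx => hx.1)) ?_)
    rw [hνIcc]; exact ENNReal.ofReal_lt_top
  have htend : Filter.Tendsto (ν ∘ A) Filter.atTop (nhds 0) := by
    have := tendsto_measure_iInter_atTop (μ := ν)
      (fun n => (hAmeas n).nullMeasurableSet) hAanti ⟨0, hAfin⟩
    rwa [hAempty, measure_empty] at this
  have hpos : (0:ℝ≥0∞) < ENNReal.ofReal (d - c) := ENNReal.ofReal_pos.2 (by linarith)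
  obtain ⟨M, hM⟩ := (htend.eventually_lt_const hpos).exists
  set E : Set ℝ := Set.Icc c d ∩ {x | |g x| ≤ (M:ℝ)} with hEdef
  have hEmeas : MeasurableSet E :=
    measurableSet_Icc.inter (measurableSet_le hgm.abs measurable_const)
  have hEIcc : E ⊆ Set.Icc c d := Set.inter_subset_left
  have hEsub : E ⊆ Set.Icc (0:ℝ) 1 := hEIcc.trans hsub
  have hgE : ∀ x ∈ E, |g x| ≤ (M:ℝ) := fun x hx => hx.2
  have hνE : ν E ≠ 0 := by
    intro h0
    have hcover : Set.Icc c d ⊆ E ∪ A M := by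
      intro x hx
      rcases le_or_gt (|g x|) (M:ℝ) with h | h
      · exact Or.inl ⟨hx, h⟩
      · exact Or.inr ⟨hx, h⟩
    have := (measure_mono hcover).trans (measure_union_le (μ := ν) E (A M))
    rw [h0, zero_add, hνIcc] at this
    exact absurd (lt_of_le_of_lt this hM) (lt_irrefl _)
  have hEvol : ν E = volume E := by
    rw [Measure.restrict_apply' measurableSet_Icc, Set.inter_eq_left.2 hEsub]
  have hvolE0 : volume E ≠ 0 := hEvol ▸ hνE
  have hvolEfin : volume E ≠ ⊤ := by
    refine ne_of_lt (lt_of_le_of_lt (measure_mono hEIcc) ?_)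
    rw [Real.volume_Icc]; exact ENNReal.ofReal_lt_top
  -- Step E : the cumulative function F
  set F : ℝ → ℝ := fun η => (volume (E ∩ Set.Iic η)).toReal with hFdef
  have hpartfin : ∀ s : Set ℝ, volume (E ∩ s) ≠ ⊤ :=
    fun s => ne_of_lt (lt_of_le_of_lt (measure_mono Set.inter_subset_left)
      (lt_of_le_of_lt (le_of_eq rfl) hvolEfin.lt_top))
  have hFadd : ∀ a b : ℝ, a ≤ b →
      volume (E ∩ Set.Iic b) = volume (E ∩ Set.Iic a) + volume (E ∩ Set.Ioc a b) := by
    intro a b hab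
    rw [← measure_union ?_ (hEmeas.inter measurableSet_Ioc)]
    · congr 1
      ext x
      simp only [Set.mem_inter_iff, Set.mem_Iic, Set.mem_union, Set.mem_Ioc]
      constructor
      · rintro ⟨hxE, hxb⟩
        rcases le_or_gt x a with h | h
        · exact Or.inl ⟨hxE, h⟩
        · exact Or.inr ⟨hxE, h, hxb⟩
      · rintro (⟨hxE, hxa⟩ | ⟨hxE, _, hxb⟩)
        · exact ⟨hxE, hxa.trans hab⟩
        · exact ⟨hxE, hxb⟩
    · rw [Set.disjoint_left]
      rintro x ⟨_, hxa⟩ ⟨_, hax, _⟩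
      exact absurd hxa (not_le.2 hax)
  have hFmono : Monotone F := by
    intro a b hab
    exact ENNReal.toReal_mono (hpartfin _) (measure_mono (Set.inter_subset_inter_right _
      (Set.Iic_subset_Iic.2 hab)))
  have hFdiff : ∀ a b : ℝ, a ≤ b → F b - F a = (volume (E ∩ Set.Ioc a b)).toReal := by
    intro a b hab
    rw [hFdef]
    simp only
    rw [hFadd a b hab, ENNReal.toReal_add (hpartfin _) (hpartfin _)]
    ring
  have hFcont : Continuous F := by
    refine (LipschitzWith.of_dist_le_mul (K := 1) ?_).continuous
    intro a b
    rcases le_total a b with hab | hab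
    · rw [Real.dist_eq, Real.dist_eq, abs_sub_comm, abs_of_nonneg (by linarith [hFmono hab]),
        hFdiff a b hab, abs_of_nonpos (by linarith)]
      push_cast
      have hle : (volume (E ∩ Set.Ioc a b)).toReal ≤ b - a := by
        calc (volume (E ∩ Set.Ioc a b)).toReal ≤ (volume (Set.Ioc a b)).toReal := by
              refine ENNReal.toReal_mono ?_ (measure_mono Set.inter_subset_right)
              rw [Real.volume_Ioc]; exact ENNReal.ofReal_ne_top
          _ = b - a := by rw [Real.volume_Ioc, ENNReal.toReal_ofReal (by linarith)]
      linarith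
    · rw [Real.dist_eq, Real.dist_eq, abs_of_nonneg (by linarith [hFmono hab]),
        hFdiff b a hab, abs_of_nonneg (by linarith)]
      push_cast
      have hle : (volume (E ∩ Set.Ioc b a)).toReal ≤ a - b := by
        calc (volume (E ∩ Set.Ioc b a)).toReal ≤ (volume (Set.Ioc b a)).toReal := by
              refine ENNReal.toReal_mono ?_ (measure_mono Set.inter_subset_right)
              rw [Real.volume_Ioc]; exact ENNReal.ofReal_ne_top
          _ = a - b := by rw [Real.volume_Ioc, ENNReal.toReal_ofReal (by linarith)]
      linarith
  set V : ℝ := (volume E).toReal with hVdef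
  have hV : 0 < V := ENNReal.toReal_pos hvolE0 hvolEfin
  have hFc : F c = 0 := by
    rw [hFdef]
    simp only
    have hsub1 : E ∩ Set.Iic c ⊆ {c} := by
      rintro x ⟨hxE, hxc⟩
      exact le_antisymm hxc (hEIcc hxE).1
    have := measure_mono_null hsub1 (Real.volume_singleton)
    rw [this, ENNReal.toReal_zero]
  have hFd : F d = V := by
    have hEq : E ∩ Set.Iic d = E := Set.inter_eq_left.2 (fun x hx => (hEIcc hx).2)
    rw [hFdef, hVdef]
    simp only [hEq]
  -- Step F : choose the cut points η n by the IVT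
  set m : ℕ → ℝ := fun n => V * (1 - (1/4:ℝ)^n) with hmdef
  have hmmem : ∀ n, m n ∈ Set.Icc (F c) (F d) := by
    intro n
    rw [hFc, hFd]
    simp only [hmdef]
    have h1 : (0:ℝ) < (1/4:ℝ)^n := by positivity
    have h2 : (1/4:ℝ)^n ≤ 1 := pow_le_one₀ (by norm_num) (by norm_num)
    constructor
    · have h3 : (0:ℝ) ≤ 1 - (1/4:ℝ)^n := by linarith
      positivity
    · nlinarith
  have hmlt : ∀ n, m n < m (n+1) := by
    intro n
    simp only [hmdef]
    have h1 : (1/4:ℝ)^(n+1) < (1/4:ℝ)^n := by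
      refine pow_lt_pow_right_of_lt_one₀ (by norm_num) (by norm_num) (Nat.lt_succ_self n)
    nlinarith [mul_pos hV (sub_pos.2 h1)]
  have hηex : ∀ n : ℕ, ∃ η ∈ Set.Icc c d, F η = m n := by
    intro n
    obtain ⟨η, hη1, hη2⟩ := intermediate_value_Icc hcd.le hFcont.continuousOn (hmmem n)
    exact ⟨η, hη1, hη2⟩
  choose η hηmem hFη using hηex
  have hηlt : ∀ n, η n < η (n+1) := by
    intro n
    by_contra h
    push_neg at h
    have := hFmono h
    rw [hFη, hFη] at this
    exact absurd this (not_le.2 (hmlt n))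
  have hηmono : Monotone η := (strictMono_nat_of_lt_succ hηlt).monotone
  -- Step G : the disjoint sets S n
  set S : ℕ → Set ℝ := fun n => E ∩ Set.Ioc (η n) (η (n+1)) with hSdef
  have hSmeas : ∀ n, MeasurableSet (S n) := fun n => hEmeas.inter measurableSet_Ioc
  have hSsubE : ∀ n, S n ⊆ E := fun n => Set.inter_subset_left
  have hStoReal : ∀ n, (volume (S n)).toReal = m (n+1) - m n := by
    intro n
    rw [← hFdiff _ _ (hηlt n).le, hFη, hFη]
  have hSpos : ∀ n, volume (S n) ≠ 0 := by
    intro n h0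
    have := hStoReal n
    rw [h0, ENNReal.toReal_zero] at this
    have := hmlt n
    linarith
  have hSle : ∀ n, volume (S n) ≤ ENNReal.ofReal (V * (1/4:ℝ)^n) := by
    intro n
    have hfin : volume (S n) ≠ ⊤ := hpartfin _
    rw [← ENNReal.ofReal_toReal hfin, hStoReal n]
    refine ENNReal.ofReal_le_ofReal ?_
    have h1 : (0:ℝ) < (1/4:ℝ)^n := by positivity
    simp only [hmdef]
    have hps : (1/4:ℝ)^(n+1) = (1/4:ℝ)^n * (1/4:ℝ) := pow_succ _ _
    have h1 : (0:ℝ) < (1/4:ℝ)^n := by positivity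
    nlinarith [mul_nonneg hV.le h1.le]
  have hSdisj : ∀ a b : ℕ, a ≠ b → Disjoint (S a) (S b) := by
    have key : ∀ a b : ℕ, a < b → Disjoint (S a) (S b) := by
      intro a b hab
      rw [Set.disjoint_left]
      rintro x ⟨_, _, hx1⟩ ⟨_, hx2, _⟩
      have : η (a+1) ≤ η b := hηmono hab
      linarith
    intro a b hab
    rcases hab.lt_or_gt with h | h
    · exact key a b h
    · exact (key b a h).symm
  -- Step H : the direction u
  set w : ℝ → ℝ≥0∞ := fun x => ∑' n, (S n).indicator (fun _ => ((n:ℝ≥0∞)+1)) x with hwdef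
  have hwmeas : Measurable w :=
    Measurable.ennreal_tsum (fun n => measurable_const.indicator (hSmeas n))
  have hw_on : ∀ n, ∀ x ∈ S n, w x = (n:ℝ≥0∞)+1 := by
    intro n x hx
    rw [hwdef]
    simp only
    rw [tsum_eq_single n]
    · rw [Set.indicator_of_mem hx]
    · intro b hbn
      refine Set.indicator_of_notMem ?_ _
      intro hxb
      exact (Set.disjoint_left.1 (hSdisj b n hbn) hxb) hx
  have hw_off : ∀ x, (∀ n, x ∉ S n) → w x = 0 := by
    intro x hx
    rw [hwdef]
    simp only
    rw [ENNReal.tsum_eq_zero]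
    exact fun n => Set.indicator_of_notMem (hx n) _
  set u : ℝ → ℝ := fun x => -((w x).toReal * g x) with hudef
  have humeas : Measurable u := (hwmeas.ennreal_toReal.mul hgm).neg
  have hu_on : ∀ n, ∀ x ∈ S n, u x = -(((n:ℝ)+1) * g x) := by
    intro n x hx
    rw [hudef]
    simp only
    rw [hw_on n x hx]
    have ht : ((n:ℝ≥0∞)+1).toReal = (n:ℝ)+1 := by
      rw [ENNReal.toReal_add (by simp) (by simp)]
      simp
    rw [ht]
  have hu_off : ∀ x, (∀ n, x ∉ S n) → u x = 0 := by
    intro x hx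
    rw [hudef]
    simp only
    rw [hw_off x hx]
    simp
  -- Step I : u ∈ L²
  have hmem : MemLp u 2 ν := by
    rw [memLp_two_iff_integrable_sq humeas.aestronglyMeasurable]
    refine ⟨(humeas.pow_const 2).aestronglyMeasurable, ?_⟩
    rw [hasFiniteIntegral_iff_ofReal (Filter.Eventually.of_forall fun x => sq_nonneg _)]
    set φ : ℝ → ℝ≥0∞ := fun x =>
      ∑' n, (S n).indicator (fun _ => ENNReal.ofReal ((((n:ℝ)+1) * (M:ℝ))^2)) x with hφdef
    have hptwise : ∀ x, ENNReal.ofReal (u x ^ 2) ≤ φ x := by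
      intro x
      by_cases hx : ∃ n, x ∈ S n
      · obtain ⟨n, hxn⟩ := hx
        have h1 : u x ^ 2 ≤ (((n:ℝ)+1) * (M:ℝ))^2 := by
          rw [hu_on n x hxn, neg_sq, mul_pow, mul_pow]
          have h2 : |g x| ≤ (M:ℝ) := hgE x (hSsubE n hxn)
          have h6 : g x ^ 2 ≤ (M:ℝ)^2 := by nlinarith [sq_abs (g x), abs_nonneg (g x)]
          have h3 : (0:ℝ) ≤ ((n:ℝ)+1)^2 := by positivity
          exact mul_le_mul_of_nonneg_left h6 h3
        calc ENNReal.ofReal (u x ^ 2) ≤ ENNReal.ofReal ((((n:ℝ)+1) * (M:ℝ))^2) :=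
              ENNReal.ofReal_le_ofReal h1
          _ = (S n).indicator (fun _ => ENNReal.ofReal ((((n:ℝ)+1) * (M:ℝ))^2)) x := by
              rw [Set.indicator_of_mem hxn]
          _ ≤ φ x := ENNReal.le_tsum n
      · push_neg at hx
        rw [hu_off x hx]
        simp
    have hφint : ∫⁻ x, φ x ∂ν < ⊤ := by
      rw [hφdef]
      simp only
      rw [lintegral_tsum (fun n =>
        (measurable_const.indicator (hSmeas n)).aemeasurable)]
      have hterm : ∀ n : ℕ, ∫⁻ x, (S n).indicator
          (fun _ => ENNReal.ofReal ((((n:ℝ)+1) * (M:ℝ))^2)) x ∂ν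
          ≤ ENNReal.ofReal ((((n:ℝ)+1) * (M:ℝ))^2 * (V * (1/4:ℝ)^n)) := by
        intro n
        rw [lintegral_indicator_const (hSmeas n)]
        have hνS : ν (S n) ≤ ENNReal.ofReal (V * (1/4:ℝ)^n) := by
          have : ν (S n) = volume (S n) := by
            rw [Measure.restrict_apply' measurableSet_Icc,
              Set.inter_eq_left.2 ((hSsubE n).trans hEsub)]
          rw [this]
          exact hSle n
        calc ENNReal.ofReal ((((n:ℝ)+1) * (M:ℝ))^2) * ν (S n)
            ≤ ENNReal.ofReal ((((n:ℝ)+1) * (M:ℝ))^2) * ENNReal.ofReal (V * (1/4:ℝ)^n) := by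
              exact mul_le_mul_right hνS _
          _ = ENNReal.ofReal ((((n:ℝ)+1) * (M:ℝ))^2 * (V * (1/4:ℝ)^n)) := by
              rw [← ENNReal.ofReal_mul (by positivity)]
      refine lt_of_le_of_lt (ENNReal.tsum_le_tsum hterm) ?_
      have hsummable : Summable (fun n : ℕ => (((n:ℝ)+1) * (M:ℝ))^2 * (V * (1/4:ℝ)^n)) := by
        have hr : ‖(1/4:ℝ)‖ < 1 := by rw [Real.norm_eq_abs]; rw [abs_of_pos]; norm_num; norm_num
        have h2 := summable_pow_mul_geometric_of_norm_lt_one 2 hr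
        have h1 := summable_pow_mul_geometric_of_norm_lt_one 1 hr
        have h0 := summable_pow_mul_geometric_of_norm_lt_one 0 hr
        have hbase : Summable (fun n : ℕ => (((n:ℝ)+1))^2 * (1/4:ℝ)^n) := by
          have := (h2.add ((h1.mul_left 2).add h0))
          refine this.congr (fun n => ?_)
          push_cast
          ring
        have := (hbase.mul_left ((M:ℝ)^2 * V))
        refine this.congr (fun n => ?_)
        ring
      rw [← ENNReal.ofReal_tsum_of_nonneg (fun n => by positivity) hsummable]
      exact ENNReal.ofReal_lt_top
    calc ∫⁻ x, ENNReal.ofReal (u x ^ 2) ∂ν ≤ ∫⁻ x, φ x ∂ν := lintegral_mono hptwise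
      _ < ⊤ := hφint
  -- Step J : contradiction with the core property
  set U : Lp ℝ 2 ν := hmem.toLp u with hUdef
  obtain ⟨δ, hδ, hδall⟩ := hcore U
  obtain ⟨n, hn⟩ := exists_nat_gt (1/δ)
  set t : ℝ := 1/((n:ℝ)+1) with htdef
  have hnpos : (0:ℝ) < (n:ℝ)+1 := by positivity
  have ht0 : 0 < t := by positivity
  have htδ : t ≤ δ := by
    have h1 : 1/δ < (n:ℝ)+1 := hn.trans_le (by linarith)
    have h2 : 1 < ((n:ℝ)+1) * δ := by
      rw [div_lt_iff₀ hδ] at h1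
      linarith [h1]
    rw [htdef, div_le_iff₀ hnpos]
    nlinarith
  have hmemA : ζ₀ + t • U ∈ A₂ := hδall t ⟨ht0.le, htδ⟩
  have h_ae := (hA₂ _).1 hmemA
  have hcoe : (((ζ₀ + t • U : Lp ℝ 2 ν)) : ℝ → ℝ) =ᵐ[ν]
      fun x => (ζ₀ : ℝ → ℝ) x + t * u x := by
    filter_upwards [Lp.coeFn_add ζ₀ (t • U), Lp.coeFn_smul t U,
      hmem.coeFn_toLp] with x h1 h2 h3
    rw [h1]
    simp only [Pi.add_apply]
    rw [h2]
    simp only [Pi.smul_apply, smul_eq_mul]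
    rw [h3]
  have h_ae2 : ∀ᵐ x ∂ν, x ∉ B₀ → (ζ₀ : ℝ → ℝ) x + t * u x + μ ≠ 0 := by
    filter_upwards [h_ae, hcoe] with x hx heq
    rw [← heq]
    exact hx
  have h_not : ∀ᵐ x ∂ν, x ∉ S n := by
    filter_upwards [h_ae2] with x hx hxS
    have hxE : x ∈ E := hSsubE n hxS
    have hxB : x ∉ B₀ := by
      rw [hB₀]
      rintro ⟨hx1, hx2⟩
      exact hβnez x (hEIcc hxE) hx2
    have hzero : (ζ₀ : ℝ → ℝ) x + t * u x + μ = 0 := by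
      rw [hu_on n x hxS, htdef]
      have h1 : ((n:ℝ)+1) ≠ 0 := hnpos.ne'
      field_simp
      ring
    exact hx hxB hzero
  have hν0 : ν (S n) = 0 := by
    have := ae_iff.1 h_not
    simpa using this
  have : volume (S n) = 0 := by
    rw [Measure.restrict_apply' measurableSet_Icc,
      Set.inter_eq_left.2 ((hSsubE n).trans hEsub)] at hν0
    exact hν0
  exact hSpos n this
end

section
/- Let $\mu, \nu, \alpha > 0$ with $\nu\alpha^2 > 2\mu$, set $\eta := (\nu\alpha^2 - 2\mu)^3/(27\nu)$, and define $g(\varsigma) := (2\nu^{-1}\varsigma + \alpha^2)(\mu + \varsigma)^2$. If $\tau^2 > \eta$, then the equation $g(\varsigma) = \tau^2$ has exactly one real solution, and this solution satisfies $\varsigma > -\mu$. -/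
theorem stmt_4 (μ ν α τ : ℝ) (hμ : 0 < μ) (hν : 0 < ν) (hα : 0 < α)
    (hcase : ν * α ^ 2 > 2 * μ)
    (η : ℝ) (hη : η = (ν * α ^ 2 - 2 * μ) ^ 3 / (27 * ν))
    (g : ℝ → ℝ) (hg : ∀ ς, g ς = (2 * ν⁻¹ * ς + α ^ 2) * (μ + ς) ^ 2)
    (hτ : τ ^ 2 > η) :
    (∃! ς : ℝ, g ς = τ ^ 2) ∧ ∀ ς : ℝ, g ς = τ ^ 2 → -μ < ς := by
  have hν' : (0:ℝ) < ν⁻¹ := inv_pos.2 hν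
  have hη0 : 0 < η := by
    rw [hη]
    apply div_pos _ (by positivity)
    have : 0 < ν * α ^ 2 - 2 * μ := by linarith
    positivity
  have hτ0 : 0 < τ ^ 2 := lt_trans hη0 hτ
  -- key bound: g ≤ η on (-∞, -μ]
  have key : ∀ ς : ℝ, ς ≤ -μ → g ς ≤ η := by
    intro ς hς
    rw [hg, hη, le_div_iff₀ (by positivity : (0:ℝ) < 27 * ν)]
    have hident : (2 * ν⁻¹ * ς + α ^ 2) * (μ + ς) ^ 2 * (27 * ν)
        - (ν * α ^ 2 - 2 * μ) ^ 3
        = (3 * ς + μ + ν * α ^ 2) ^ 2 * (6 * ς - ν * α ^ 2 + 8 * μ) := by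
      field_simp
      ring
    nlinarith [sq_nonneg (3 * ς + μ + ν * α ^ 2)]
  -- strict monotonicity on (-μ, ∞)
  have mono : ∀ a b : ℝ, -μ < a → a < b → g a < g b := by
    intro a b ha hab
    rw [hg, hg]
    have hx : 0 < μ + a := by linarith
    have hy : 0 < μ + b := by linarith
    have hd : 0 < b - a := by linarith
    have hA : 2 * ν⁻¹ * μ < α ^ 2 := by
      rw [show (2:ℝ) * ν⁻¹ * μ = 2 * μ / ν by ring, div_lt_iff₀ hν]; linarith
    nlinarith [mul_pos hν' (mul_pos hd (mul_pos hx hx)),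
      mul_pos hν' (mul_pos hd (mul_pos hy hy)),
      mul_pos hν' (mul_pos hd (mul_pos hx hy)),
      mul_pos (mul_pos (by linarith : (0:ℝ) < α ^ 2 - 2 * ν⁻¹ * μ) hd) (add_pos hx hy)]
  -- all solutions are > -μ
  have sols : ∀ ς : ℝ, g ς = τ ^ 2 → -μ < ς := by
    intro ς hgς
    by_contra h
    push_neg at h
    have := key ς h
    linarith [hgς ▸ this]
  -- existence via IVT
  have hcont : Continuous g := by
    have : g = fun ς => (2 * ν⁻¹ * ς + α ^ 2) * (μ + ς) ^ 2 := funext hg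
    rw [this]; continuity
  set M : ℝ := ν * τ ^ 2 / (2 * μ ^ 2) with hM
  have hMpos : 0 < M := by positivity
  have hgM : τ ^ 2 ≤ g M := by
    rw [hg]
    have h1 : 2 * ν⁻¹ * M = τ ^ 2 / μ ^ 2 := by
      rw [hM]; field_simp <;> ring
    have h2 : τ ^ 2 / μ ^ 2 * μ ^ 2 = τ ^ 2 := by field_simp
    have h3 : 0 ≤ τ ^ 2 / μ ^ 2 := by positivity
    have h4 : μ ^ 2 ≤ (μ + M) ^ 2 := by nlinarith [mul_pos hMpos hμ, sq_nonneg M]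
    nlinarith [mul_nonneg h3 (sub_nonneg.2 h4), mul_nonneg (sq_nonneg α) (sq_nonneg (μ + M))]
  have hle : -μ ≤ M := by linarith
  have hgneg : g (-μ) = 0 := by rw [hg]; ring
  have hmem : τ ^ 2 ∈ Set.Icc (g (-μ)) (g M) := by
    rw [hgneg]; exact ⟨le_of_lt hτ0, hgM⟩
  obtain ⟨c, _, hc⟩ := intermediate_value_Icc hle hcont.continuousOn hmem
  refine ⟨⟨c, hc, ?_⟩, sols⟩
  intro b hb
  have hbμ := sols b hb
  have hcμ := sols c hc
  rcases lt_trichotomy b c with h | h | h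
  · exact absurd (hb.trans hc.symm) (ne_of_lt (mono b c hbμ h))
  · exact h
  · exact absurd (hc.trans hb.symm) (ne_of_lt (mono c b hcμ h))
end

section
/- Let $\mu, \nu, \alpha > 0$ with $\nu\alpha^2 > 2\mu$, set $\eta := (\nu\alpha^2 - 2\mu)^3/(27\nu)$ and $\rho := -\tfrac{1}{3}(\mu + \nu\alpha^2)$, and define $g(\varsigma) := (2\nu^{-1}\varsigma + \alpha^2)(\mu + \varsigma)^2$. If $0 < \tau^2 \leq \eta$, then the equation $g(\varsigma) = \tau^2$ has three real solutions $\varsigma_1 \geq \varsigma_2 \geq \varsigma_3$ (counted with multiplicity) satisfying $-\tfrac{1}{2}\nu\alpha^2 \leq \varsigma_3 \leq \rho \leq \varsigma_2 \leq -\mu \leq \varsigma_1$. -/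
lemma cubic_three_roots (L B C D a b c : ℝ) (hL : L ≠ 0)
    (hab : a ≠ b) (hac : a ≠ c) (hbc : b ≠ c)
    (ha : L*a^3 + B*a^2 + C*a + D = 0)
    (hb : L*b^3 + B*b^2 + C*b + D = 0)
    (hc : L*c^3 + B*c^2 + C*c + D = 0)
    (x : ℝ) (hx : L*x^3 + B*x^2 + C*x + D = 0) : x = a ∨ x = b ∨ x = c := by
  have hab' : a - b ≠ 0 := sub_ne_zero.mpr hab
  have hac' : a - c ≠ 0 := sub_ne_zero.mpr hac
  have hbc' : b - c ≠ 0 := sub_ne_zero.mpr hbc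
  have h1 : L*(a^2+a*b+b^2) + B*(a+b) + C = 0 := by
    apply mul_left_cancel₀ hab'
    linear_combination ha - hb
  have h2 : L*(a^2+a*c+c^2) + B*(a+c) + C = 0 := by
    apply mul_left_cancel₀ hac'
    linear_combination ha - hc
  have hB : B = -L*(a+b+c) := by
    apply mul_left_cancel₀ hbc'
    linear_combination h1 - h2
  have hC : C = L*(a*b+a*c+b*c) := by
    linear_combination h1 - (a+b)*hB
  have hD : D = -L*(a*b*c) := by
    linear_combination ha - a^2*hB - a*hC
  have hz : (x-a)*((x-b)*(x-c)) = 0 := by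
    apply mul_left_cancel₀ hL
    linear_combination hx - x^2*hB - x*hC - hD
  rcases mul_eq_zero.mp hz with h | h
  · exact Or.inl (sub_eq_zero.mp h)
  · rcases mul_eq_zero.mp h with h' | h'
    · exact Or.inr (Or.inl (sub_eq_zero.mp h'))
    · exact Or.inr (Or.inr (sub_eq_zero.mp h'))

theorem stmt_5 (μ ν α τ : ℝ) (hμ : 0 < μ) (hν : 0 < ν) (hα : 0 < α)
    (hcase : ν * α ^ 2 > 2 * μ)
    (η ρ : ℝ) (hη : η = (ν * α ^ 2 - 2 * μ) ^ 3 / (27 * ν))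
    (hρ : ρ = -(1/3) * (μ + ν * α ^ 2))
    (g : ℝ → ℝ) (hg : ∀ ς, g ς = (2 * ν⁻¹ * ς + α ^ 2) * (μ + ς) ^ 2)
    (hτ0 : 0 < τ ^ 2) (hτη : τ ^ 2 ≤ η) :
    ∃ ς₁ ς₂ ς₃ : ℝ, g ς₁ = τ ^ 2 ∧ g ς₂ = τ ^ 2 ∧ g ς₃ = τ ^ 2 ∧
      ς₃ ≤ ς₂ ∧ ς₂ ≤ ς₁ ∧
      -(1/2) * ν * α ^ 2 ≤ ς₃ ∧ ς₃ ≤ ρ ∧ ρ ≤ ς₂ ∧ ς₂ ≤ -μ ∧ -μ ≤ ς₁ ∧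
      (∀ ς : ℝ, g ς = τ ^ 2 → ς = ς₁ ∨ ς = ς₂ ∨ ς = ς₃) := by
  have hνne : ν ≠ 0 := ne_of_gt hν
  have hgc : Continuous g := by
    have hgeq : g = fun x => (2 * ν⁻¹ * x + α ^ 2) * (μ + x) ^ 2 := funext hg
    rw [hgeq]; continuity
  have hgρ : g ρ = η := by
    rw [hg, hρ, hη]; field_simp; ring
  have hgμ : g (-μ) = 0 := by rw [hg]; ring
  have hga : g (-(1/2) * ν * α ^ 2) = 0 := by
    rw [hg]
    have h0 : 2 * ν⁻¹ * (-(1/2) * ν * α ^ 2) + α ^ 2 = 0 := by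
      field_simp; ring
    rw [h0]; ring
  have hle1 : -(1/2) * ν * α ^ 2 ≤ ρ := by rw [hρ]; linarith
  have hle2 : ρ ≤ -μ := by rw [hρ]; linarith
  -- the cubic expansion
  have hroot : ∀ x : ℝ, g x = τ ^ 2 →
      2*ν⁻¹*x^3 + (α^2+4*μ*ν⁻¹)*x^2 + (2*μ^2*ν⁻¹+2*μ*α^2)*x + (μ^2*α^2 - τ^2) = 0 := by
    intro x hx
    rw [hg] at hx
    linear_combination hx
  have hL : (2:ℝ)*ν⁻¹ ≠ 0 := by positivity
  rcases eq_or_lt_of_le hτη with heq | hlt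
  · -- boundary case: τ² = η, double root at ρ
    set s : ℝ := (ν*α^2 - 8*μ)/6 with hs
    have hgs : g s = τ ^ 2 := by
      rw [heq, hg, hη, hs]; field_simp; ring
    have hρs : ρ ≤ s := by rw [hρ, hs]; linarith
    have hμs : -μ ≤ s := by rw [hs]; linarith
    refine ⟨s, ρ, ρ, hgs, by rw [hgρ, heq], by rw [hgρ, heq], le_refl ρ, hρs,
      hle1, le_refl ρ, le_refl ρ, hle2, hμs, ?_⟩
    intro ς hς
    have hident : g ς - η = 2*ν⁻¹*((ς-ρ)^2*(ς-s)) := by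
      rw [hg, hη, hρ, hs]; field_simp; ring
    rw [hς, ← heq] at hident
    have hz : (ς-ρ)^2*(ς-s) = 0 := by
      apply mul_left_cancel₀ hL
      linear_combination -hident
    rcases mul_eq_zero.mp hz with h | h
    · right; left; exact sub_eq_zero.mp (pow_eq_zero_iff (by norm_num) |>.mp h)
    · left; exact sub_eq_zero.mp h
  · -- generic case: τ² < η, three distinct roots
    set M : ℝ := max (1 - μ) (ν*τ^2/2) with hM
    have hM1 : 1 - μ ≤ M := le_max_left _ _
    have hM2 : ν*τ^2/2 ≤ M := le_max_right _ _
    have hμM : -μ ≤ M := by linarith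
    have hgM : τ ^ 2 ≤ g M := by
      rw [hg]
      have hA : τ^2 ≤ 2 * ν⁻¹ * M := by
        rw [show (2:ℝ)*ν⁻¹*M = 2*M/ν by rw [div_eq_mul_inv]; ring, le_div_iff₀ hν]
        nlinarith
      have h1M : (1:ℝ) ≤ μ + M := by linarith
      have hsq : (1:ℝ) ≤ (μ+M)^2 := by nlinarith
      calc τ^2 ≤ τ^2 * (μ+M)^2 := by nlinarith
        _ ≤ (2*ν⁻¹*M + α^2) * (μ+M)^2 := by
            apply mul_le_mul_of_nonneg_right _ (sq_nonneg _)
            nlinarith [sq_nonneg α]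
    obtain ⟨ς₃, h3mem, h3val⟩ := intermediate_value_Icc hle1 hgc.continuousOn
      (by rw [Set.mem_Icc, hga, hgρ]; exact ⟨le_of_lt hτ0, hτη⟩)
    obtain ⟨ς₂, h2mem, h2val⟩ := intermediate_value_Icc' hle2 hgc.continuousOn
      (by rw [Set.mem_Icc, hgμ, hgρ]; exact ⟨le_of_lt hτ0, hτη⟩)
    obtain ⟨ς₁, h1mem, h1val⟩ := intermediate_value_Icc hμM hgc.continuousOn
      (by rw [Set.mem_Icc, hgμ]; exact ⟨le_of_lt hτ0, hgM⟩)
    have h3ρ : ς₃ < ρ := lt_of_le_of_ne h3mem.2 (by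
      intro h; rw [h, hgρ] at h3val; exact absurd h3val (ne_of_lt hlt).symm)
    have hρ2 : ρ < ς₂ := lt_of_le_of_ne h2mem.1 (by
      intro h; rw [← h, hgρ] at h2val; exact absurd h2val (ne_of_lt hlt).symm)
    have h2μ : ς₂ < -μ := lt_of_le_of_ne h2mem.2 (by
      intro h; rw [h, hgμ] at h2val; exact absurd h2val.symm (ne_of_gt hτ0))
    have hμ1 : -μ < ς₁ := lt_of_le_of_ne h1mem.1 (by
      intro h; rw [← h, hgμ] at h1val; exact absurd h1val.symm (ne_of_gt hτ0))
    have h12 : ς₂ < ς₁ := lt_trans h2μ hμ1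
    have h23 : ς₃ < ς₂ := lt_trans h3ρ hρ2
    have h13 : ς₃ < ς₁ := lt_trans h23 h12
    refine ⟨ς₁, ς₂, ς₃, h1val, h2val, h3val, le_of_lt h23, le_of_lt h12,
      h3mem.1, h3mem.2, h2mem.1, h2mem.2, h1mem.1, ?_⟩
    intro ς hς
    exact cubic_three_roots _ _ _ _ ς₁ ς₂ ς₃ hL h12.ne' h13.ne' h23.ne' (hroot ς₁ h1val) (hroot ς₂ h2val) (hroot ς₃ h3val) ς (hroot ς hς)
end

section
/- Let $\mu, \nu, \alpha > 0$ with $\nu\alpha^2 > 2\mu$ and $\tau \in \mathbb{R}$ with $\tau^2 > \eta := (\nu\alpha^2-2\mu)^3/(27\nu)$. Let $\varsigma_1 > -\mu$ be the unique real solution of $(2\nu^{-1}\varsigma + \alpha^2)(\mu+\varsigma)^2 = \tau^2$. Define $h_\tau(\varsigma) := -\tfrac{1}{2}\big[\tau^2/(\varsigma+\mu) + 2\alpha\tau + \alpha^2(\varsigma+\mu) + \nu^{-1}\varsigma^2\big]$. Then $h_\tau(\varsigma) \leq h_\tau(\varsigma_1)$ for all $\varsigma > -\mu$, i.e., $\varsigma_1$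 is the global maximizer of $h_\tau$ on $(-\mu, \infty)$. -/
theorem stmt_8 (μ ν α τ : ℝ) (hμ : 0 < μ) (hν : 0 < ν) (hα : 0 < α)
    (hcase : ν * α ^ 2 > 2 * μ)
    (η : ℝ) (hη : η = (ν * α ^ 2 - 2 * μ) ^ 3 / (27 * ν)) (hτ : τ ^ 2 > η)
    (ς₁ : ℝ) (hς₁ : ς₁ > -μ)
    (hsol : (2 * ν⁻¹ * ς₁ + α ^ 2) * (μ + ς₁) ^ 2 = τ ^ 2)
    (h : ℝ → ℝ)
    (hh : ∀ ς : ℝ, h ς =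
      -(1/2) * (τ ^ 2 / (ς + μ) + 2 * α * τ + α ^ 2 * (ς + μ) + ν⁻¹ * ς ^ 2)) :
    ∀ ς : ℝ, ς > -μ → h ς ≤ h ς₁ := by
  intro ς hς
  rw [hh, hh]
  have ha : 0 < ς + μ := by linarith
  have ha1 : 0 < ς₁ + μ := by linarith
  have key : τ ^ 2 / (ς₁ + μ) + α ^ 2 * (ς₁ + μ) + ν⁻¹ * ς₁ ^ 2
      ≤ τ ^ 2 / (ς + μ) + α ^ 2 * (ς + μ) + ν⁻¹ * ς ^ 2 := by
    rw [← sub_nonneg]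
    have hE : (τ ^ 2 / (ς + μ) + α ^ 2 * (ς + μ) + ν⁻¹ * ς ^ 2)
        - (τ ^ 2 / (ς₁ + μ) + α ^ 2 * (ς₁ + μ) + ν⁻¹ * ς₁ ^ 2)
        = (ς - ς₁) ^ 2 * (ν * α ^ 2 + ς + μ + 2 * ς₁) / (ν * (ς + μ)) := by
      rw [← hsol]
      field_simp
      ring
    rw [hE]
    apply div_nonneg
    · apply mul_nonneg (sq_nonneg _)
      linarith
    · positivity
  linarith
end

section
/- Let $\mu, \nu, \alpha > 0$ with $\nu\alpha^2 > 2\mu$, $\eta := (\nu\alpha^2-2\mu)^3/(27\nu)$, and $\tau \in \mathbb{R}$ with $0 < \tau^2 \leq \eta$. Let $\varsigma_3 \leq \varsigma_2 \leq -\mu$ be the two solutions of $(2\nu^{-1}\varsigma + \alpha^2)(\mu+\varsigma)^2 = \tau^2$ in $[-\tfrac{1}{2}\nu\alpha^2, -\mu]$ with $\varsigma_3 \leq \rho \leq \varsigma_2$ where $\rho := -\tfrac{1}{3}(\mu+\nu\alpha^2)$. Define $h_\tau(\varsigma) := -\tfrac{1}{2}\big[\tau^2/(\varsigma+\mu) +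 2\alpha\tau + \alpha^2(\varsigma+\mu) + \nu^{-1}\varsigma^2\big]$. Then $h_\tau(\varsigma_2) \leq h_\tau(\varsigma)$ for all $\varsigma \in [\varsigma_3, -\mu)$, i.e., $\varsigma_2$ minimizes $h_\tau$ on $[\varsigma_3, -\mu)$. -/
theorem keyA (μ ν α τ ς₂ ς₃ : ℝ) (hμ : 0 < μ) (hν : 0 < ν)
    (hcase : ν * α ^ 2 > 2 * μ)
    (hord : ς₃ ≤ ς₂) (hς₂ : ς₂ ≤ -μ)
    (hmem₃ : -(1/2) * ν * α ^ 2 ≤ ς₃)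
    (hρ₂ : -(1/3) * (μ + ν * α ^ 2) ≤ ς₂)
    (h2 : (2 * ς₂ + ν * α ^ 2) * (μ + ς₂) ^ 2 = ν * τ ^ 2)
    (h3 : (2 * ς₃ + ν * α ^ 2) * (μ + ς₃) ^ 2 = ν * τ ^ 2) :
    ς₂ + ς₃ ≥ 2 * (-(1/3) * (μ + ν * α ^ 2)) := by
  by_contra hc
  push_neg at hc
  set ρ : ℝ := -(1/3) * (μ + ν * α ^ 2) with hρ
  set w : ℝ := 2 * ρ - ς₃ with hw
  have hwm : w ≤ -μ := by simp only [hw, hρ]; nlinarith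
  have hw2 : ς₂ < w := by simp only [hw]; linarith
  have hb : 0 < ρ - ς₃ := by linarith
  have gw : (2 * w + ν * α ^ 2) * (μ + w) ^ 2 = ν * τ ^ 2 + 4 * (ρ - ς₃) ^ 3 := by
    simp only [hw, hρ]
    linear_combination h3
  have hQ : 2 * (w^2 + w*ς₂ + ς₂^2) + (4*μ + ν*α^2) * (w + ς₂) + 2*μ^2 + 2*μ*ν*α^2 ≤ 0 := by
    have h1 : ρ ≤ w := by linarith
    nlinarith [mul_nonneg (sub_nonneg.2 h1) (sub_nonneg.2 hwm),
      mul_nonneg (sub_nonneg.2 hρ₂) (sub_nonneg.2 hς₂),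
      mul_nonneg (sub_nonneg.2 h1) (sub_nonneg.2 hς₂),
      mul_nonneg (sub_nonneg.2 hwm) (sub_nonneg.2 hρ₂),
      mul_nonneg (sub_nonneg.2 hwm) (sub_nonneg.2 hς₂),
      mul_nonneg (sub_nonneg.2 h1) (sub_nonneg.2 hρ₂), sq_nonneg (ρ + μ)]
  have hfac : (2 * w + ν * α ^ 2) * (μ + w) ^ 2 - (2 * ς₂ + ν * α ^ 2) * (μ + ς₂) ^ 2
      = (w - ς₂) * (2 * (w^2 + w*ς₂ + ς₂^2) + (4*μ + ν*α^2) * (w + ς₂) + 2*μ^2 + 2*μ*ν*α^2) := by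
    ring
  nlinarith [mul_nonpos_of_nonneg_of_nonpos (le_of_lt (sub_pos.2 hw2)) hQ,
    pow_pos hb 3]

theorem stmt_9 (μ ν α τ : ℝ) (hμ : 0 < μ) (hν : 0 < ν) (hα : 0 < α)
    (hcase : ν * α ^ 2 > 2 * μ)
    (η ρ : ℝ) (hη : η = (ν * α ^ 2 - 2 * μ) ^ 3 / (27 * ν))
    (hρ : ρ = -(1/3) * (μ + ν * α ^ 2))
    (hτ0 : 0 < τ ^ 2) (hτη : τ ^ 2 ≤ η)
    (ς₂ ς₃ : ℝ) (hord : ς₃ ≤ ς₂) (hς₂ : ς₂ ≤ -μ)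
    (hmem₃ : -(1/2) * ν * α ^ 2 ≤ ς₃) (hρ₃ : ς₃ ≤ ρ) (hρ₂ : ρ ≤ ς₂)
    (hsol₂ : (2 * ν⁻¹ * ς₂ + α ^ 2) * (μ + ς₂) ^ 2 = τ ^ 2)
    (hsol₃ : (2 * ν⁻¹ * ς₃ + α ^ 2) * (μ + ς₃) ^ 2 = τ ^ 2)
    (h : ℝ → ℝ)
    (hh : ∀ ς : ℝ, h ς =
      -(1/2) * (τ ^ 2 / (ς + μ) + 2 * α * τ + α ^ 2 * (ς + μ) + ν⁻¹ * ς ^ 2)) :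
    ∀ ς : ℝ, ς₃ ≤ ς → ς < -μ → h ς₂ ≤ h ς := by
  have hν' : ν ≠ 0 := ne_of_gt hν
  -- clear ν⁻¹ in the solution equations
  have h2 : (2 * ς₂ + ν * α ^ 2) * (μ + ς₂) ^ 2 = ν * τ ^ 2 := by
    field_simp at hsol₂ ⊢
    linear_combination hsol₂
  have h3 : (2 * ς₃ + ν * α ^ 2) * (μ + ς₃) ^ 2 = ν * τ ^ 2 := by
    field_simp at hsol₃ ⊢
    linear_combination hsol₃
  have hkey : ς₂ + ς₃ ≥ 2 * (-(1/3) * (μ + ν * α ^ 2)) :=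
    keyA μ ν α τ ς₂ ς₃ hμ hν hcase hord hς₂ hmem₃ (hρ ▸ hρ₂) h2 h3
  -- ς₂ < -μ strictly
  have hς₂' : ς₂ < -μ := by
    rcases lt_or_eq_of_le hς₂ with h' | h'
    · exact h'
    · exfalso; rw [h'] at h2; nlinarith
  intro ς hl hu
  have hx : ς + μ < 0 := by linarith
  have hx2 : ς₂ + μ < 0 := by linarith
  rw [hh, hh]
  have e2 : τ ^ 2 / (ς₂ + μ) = (2 * ν⁻¹ * ς₂ + α ^ 2) * (μ + ς₂) := by
    rw [div_eq_iff (ne_of_lt hx2), ← hsol₂]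
    ring
  rw [e2]
  set u : ℝ := τ ^ 2 / (ς + μ) with hu'
  have eu : u * (ς + μ) = τ ^ 2 := div_mul_cancel₀ _ (ne_of_lt hx)
  -- multiply the desired inequality by ν > 0
  have hA : ν * ((2 * ν⁻¹ * ς₂ + α ^ 2) * (μ + ς₂) + α ^ 2 * (ς₂ + μ) + ν⁻¹ * ς₂ ^ 2)
      = (2 * ς₂ + ν * α ^ 2) * (μ + ς₂) + ν * α ^ 2 * (ς₂ + μ) + ς₂ ^ 2 := by
    field_simp
  have hB : ν * (u + α ^ 2 * (ς + μ) + ν⁻¹ * ς ^ 2)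
      = ν * u + ν * α ^ 2 * (ς + μ) + ς ^ 2 := by
    field_simp
  have hr : 0 ≤ (ς - ς₂)^2 * (ς + (μ + ν * α ^ 2) + 2 * ς₂) := by
    apply mul_nonneg (sq_nonneg _)
    linarith
  have hid : (((2 * ς₂ + ν * α ^ 2) * (μ + ς₂) + ν * α ^ 2 * (ς₂ + μ) + ς₂ ^ 2)
        - (ν * u + ν * α ^ 2 * (ς + μ) + ς ^ 2)) * (ς + μ)
      = -((ς - ς₂)^2 * (ς + (μ + ν * α ^ 2) + 2 * ς₂)) := by
    linear_combination (-ν) * eu + h2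
  have hdiff : 0 ≤ ((2 * ς₂ + ν * α ^ 2) * (μ + ς₂) + ν * α ^ 2 * (ς₂ + μ) + ς₂ ^ 2)
      - (ν * u + ν * α ^ 2 * (ς + μ) + ς ^ 2) := by
    by_contra hcon
    push_neg at hcon
    linarith [hid, hr, mul_pos_of_neg_of_neg hcon hx]
  have goal2 : ν * (u + α ^ 2 * (ς + μ) + ν⁻¹ * ς ^ 2)
      ≤ ν * ((2 * ν⁻¹ * ς₂ + α ^ 2) * (μ + ς₂) + α ^ 2 * (ς₂ + μ) + ν⁻¹ * ς₂ ^ 2) := by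
    rw [hA, hB]; linarith
  have goal3 := le_of_mul_le_mul_left goal2 hν
  linarith [goal3]
end

section
/- Let $\mu, \nu, \alpha > 0$ with $\nu\alpha^2 > 2\mu$, $\eta := (\nu\alpha^2-2\mu)^3/(27\nu)$, and $\tau \in \mathbb{R}$ with $0 < \tau^2 \leq \eta$. Let $\varsigma_3$ be the solution of $(2\nu^{-1}\varsigma + \alpha^2)(\mu+\varsigma)^2 = \tau^2$ in $[-\tfrac{1}{2}\nu\alpha^2, \rho]$ where $\rho := -\tfrac{1}{3}(\mu+\nu\alpha^2)$, and $\varsigma_2$ the solution in $[\rho,-\mu]$. Define $h_\tau(\varsigma) := -\tfrac{1}{2}\big[\tau^2/(\varsigma+\mu) + 2\alpha\tau + \alpha^2(\varsigma+\mu) + \nu^{-1}\varsigma^2\big]$. Then $h_\tau(\varsigma) \leq h_\tau(\varsigma_3)$ for all $\varsigma \in [-\tfrac{1}{2}\nu\alpha^2, \varsigma_2]$, i.e., $\varsigma_3$ maximizes $h_\tau$ on $[-\tfrac{1}{2}\nu\alpha^2, \varsigma_2]$. -/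
lemma lemA_aux (m a x y : ℝ) (ha : a > 2*m)
    (hx1 : -(1/3)*(m+a) ≤ x) (hx2 : x ≤ -m)
    (hy2 : y ≤ -(1/3)*(m+a))
    (hE : (2*x+a)*(m+x)^2 = (2*y+a)*(m+y)^2) :
    x + 2*y + m + a ≤ 0 := by
  by_contra hc
  push_neg at hc
  set r : ℝ := -(m + a + 2*y) with hr
  have hrρ : -(1/3)*(m+a) ≤ r := by simp only [hr]; linarith
  have hrx : r < x := by simp only [hr]; linarith
  have hgr : (2*r+a)*(m+r)^2 - (2*y+a)*(m+y)^2 = -(a+2*y)*(3*y+m+a)^2 := by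
    simp only [hr]; ring
  have hy1 : -(1/2)*a ≤ y := by linarith
  have hgr0 : (2*r+a)*(m+r)^2 ≤ (2*y+a)*(m+y)^2 := by
    nlinarith [sq_nonneg (3*y+m+a)]
  have hQ : 2*(r^2 + r*x + x^2) + (4*m+a)*(r+x) + 2*m*(m+a) < 0 := by
    nlinarith [mul_nonneg (by linarith : (0:ℝ) ≤ x - r) (by linarith : (0:ℝ) ≤ -m - x),
      mul_nonneg (by linarith : (0:ℝ) ≤ r + (1/3)*(m+a)) (by linarith : (0:ℝ) ≤ -m - x),
      mul_nonneg (by linarith : (0:ℝ) ≤ r + (1/3)*(m+a)) (by linarith : (0:ℝ) ≤ -m - r),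
      mul_pos (by linarith : (0:ℝ) < x - r) (by linarith : (0:ℝ) < a - 2*m),
      sq_nonneg (x - r)]
  have hfac : (2*r+a)*(m+r)^2 - (2*x+a)*(m+x)^2
      = (r - x) * (2*(r^2 + r*x + x^2) + (4*m+a)*(r+x) + 2*m*(m+a)) := by ring
  nlinarith [mul_pos (by linarith : (0:ℝ) < x - r)
    (by linarith : (0:ℝ) < -(2*(r^2 + r*x + x^2) + (4*m+a)*(r+x) + 2*m*(m+a)))]

set_option maxHeartbeats 1000000 in
theorem stmt_10 (μ ν α τ : ℝ) (hμ : 0 < μ) (hν : 0 < ν) (hα : 0 < α)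
    (hcase : ν * α ^ 2 > 2 * μ)
    (η ρ : ℝ) (hη : η = (ν * α ^ 2 - 2 * μ) ^ 3 / (27 * ν))
    (hρ : ρ = -(1/3) * (μ + ν * α ^ 2))
    (hτ0 : 0 < τ ^ 2) (hτη : τ ^ 2 ≤ η)
    (ς₂ ς₃ : ℝ)
    (hmem₃ : -(1/2) * ν * α ^ 2 ≤ ς₃) (hρ₃ : ς₃ ≤ ρ)
    (hρ₂ : ρ ≤ ς₂) (hς₂ : ς₂ ≤ -μ)
    (hsol₂ : (2 * ν⁻¹ * ς₂ + α ^ 2) * (μ + ς₂) ^ 2 = τ ^ 2)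
    (hsol₃ : (2 * ν⁻¹ * ς₃ + α ^ 2) * (μ + ς₃) ^ 2 = τ ^ 2)
    (h : ℝ → ℝ)
    (hh : ∀ ς : ℝ, h ς =
      -(1/2) * (τ ^ 2 / (ς + μ) + 2 * α * τ + α ^ 2 * (ς + μ) + ν⁻¹ * ς ^ 2)) :
    ∀ ς : ℝ, -(1/2) * ν * α ^ 2 ≤ ς → ς ≤ ς₂ → h ς ≤ h ς₃ := by
  have hν' : ν ≠ 0 := ne_of_gt hν
  have hE₂ : (2*ς₂+ν*α^2)*(μ+ς₂)^2 = ν * τ^2 := by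
    field_simp at hsol₂; linear_combination hsol₂
  have hE₃ : (2*ς₃+ν*α^2)*(μ+ς₃)^2 = ν * τ^2 := by
    field_simp at hsol₃; linear_combination hsol₃
  have hE : (2*ς₂+ν*α^2)*(μ+ς₂)^2 = (2*ς₃+ν*α^2)*(μ+ς₃)^2 := by rw [hE₂, hE₃]
  have hkey : ς₂ + 2*ς₃ + μ + ν*α^2 ≤ 0 :=
    lemA_aux μ (ν*α^2) ς₂ ς₃ hcase (by rw [hρ] at hρ₂; linarith) hς₂
      (by rw [hρ] at hρ₃; linarith) hE
  have hς₂' : ς₂ < -μ := by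
    rcases lt_or_eq_of_le hς₂ with h' | h'
    · exact h'
    · exfalso
      rw [h'] at hE₂
      nlinarith [hE₂]
  have hρμ : ρ < -μ := by rw [hρ]; nlinarith
  have hς₃' : ς₃ < -μ := lt_of_le_of_lt hρ₃ hρμ
  intro ς hl hr
  have hςμ : ς + μ < 0 := by linarith
  have hς₃μ : ς₃ + μ < 0 := by linarith
  have hne : ς + μ ≠ 0 := ne_of_lt hςμ
  have hne₃ : ς₃ + μ ≠ 0 := ne_of_lt hς₃μ
  have hτ2 : τ^2 = (2*ς₃+ν*α^2)*(μ+ς₃)^2 / ν := by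
    rw [eq_div_iff hν']; linear_combination -hE₃
  have hquot : h ς₃ - h ς = (ς - ς₃)^2 * (ς + μ + ν*α^2 + 2*ς₃) / (2*ν*(ς+μ)) := by
    rw [hh, hh, hτ2]
    field_simp
    ring
  have hnum : (ς - ς₃)^2 * (ς + μ + ν*α^2 + 2*ς₃) ≤ 0 :=
    mul_nonpos_of_nonneg_of_nonpos (sq_nonneg _) (by linarith)
  have hden : 2*ν*(ς+μ) < 0 := mul_neg_of_pos_of_neg (by linarith) hςμ
  have h0 : 0 ≤ h ς₃ - h ς := by
    rw [hquot, ← neg_div_neg_eq]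
    exact div_nonneg (by linarith) (by linarith)
  linarith
end

section
/- Let $\mu, \nu, \alpha \in \mathbb{R}$ with $\mu, \nu > 0$ and $\nu\alpha^2 > 2\mu$, and let $\beta \in \mathbb{R}$ with $\beta^2 = \eta := (\nu\alpha^2 - 2\mu)^3/(27\nu)$ and $\beta \neq 0$. Set $\rho := -\tfrac{1}{3}(\mu + \nu\alpha^2)$ and define $p(y) := \tfrac{1}{2}\mu y^2 + \tfrac{1}{2}\nu(\tfrac{1}{2}y^2 - \alpha y)^2 - (\alpha\mu + \beta)y$. Then $v_0 := \alpha + \beta/(\rho + \mu)$ satisfies $p'(v_0) = 0$, $p''(v_0) = 0$, and $p'''(v_0) = 3\nu\beta/(\rho + \mu) \neq 0$; consequently $v_0$ is neither a local minimum nor a local maximum of $p$. -/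
theorem deriv_poly4 (a b c d : ℝ) :
    deriv (fun y : ℝ => a*y^4 + b*y^3 + c*y^2 + d*y)
      = fun x => 4*a*x^3 + 3*b*x^2 + 2*c*x + d := by
  funext x
  have h : HasDerivAt (fun y : ℝ => a*y^4 + b*y^3 + c*y^2 + d*y)
      (4*a*x^3 + 3*b*x^2 + 2*c*x + d) x := by
    have h4 := (hasDerivAt_pow 4 x).const_mul a
    have h3 := (hasDerivAt_pow 3 x).const_mul b
    have h2 := (hasDerivAt_pow 2 x).const_mul c
    have h1 := (hasDerivAt_id x).const_mul d
    convert ((h4.add h3).add h2).add h1 using 1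
    · rfl
    · rfl
    · rfl
    push_cast; ring
  exact h.deriv

theorem deriv_poly3 (a b c d : ℝ) :
    deriv (fun y : ℝ => a*y^3 + b*y^2 + c*y + d)
      = fun x => 3*a*x^2 + 2*b*x + c := by
  funext x
  have h : HasDerivAt (fun y : ℝ => a*y^3 + b*y^2 + c*y + d)
      (3*a*x^2 + 2*b*x + c) x := by
    have h3 := (hasDerivAt_pow 3 x).const_mul a
    have h2 := (hasDerivAt_pow 2 x).const_mul b
    have h1 := (hasDerivAt_id x).const_mul c
    have h0 : HasDerivAt (fun _ : ℝ => d) 0 x := hasDerivAt_const x d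
    convert ((h3.add h2).add h1).add h0 using 1
    · rfl
    · rfl
    · rfl
    push_cast; ring
  exact h.deriv

theorem deriv_poly2 (a b c : ℝ) :
    deriv (fun y : ℝ => a*y^2 + b*y + c) = fun x => 2*a*x + b := by
  funext x
  have h : HasDerivAt (fun y : ℝ => a*y^2 + b*y + c) (2*a*x + b) x := by
    have h2 := (hasDerivAt_pow 2 x).const_mul a
    have h1 := (hasDerivAt_id x).const_mul b
    have h0 : HasDerivAt (fun _ : ℝ => c) 0 x := hasDerivAt_const x c
    convert (h2.add h1).add h0 using 1
    · rfl
    · rfl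
    · rfl
    push_cast; ring
  exact h.deriv

theorem aux_not_extr (f : ℝ → ℝ) (x c ν : ℝ) (hν : 0 < ν) (hc : c ≠ 0)
    (hid : ∀ h : ℝ, f (x + h) = f x + h ^ 3 * (c + ν / 8 * h)) :
    ¬ IsLocalMin f x ∧ ¬ IsLocalMax f x := by
  have key : ∀ δ : ℝ, 0 < δ →
      (∃ h : ℝ, |h| < δ ∧ f (x + h) < f x) ∧ (∃ h : ℝ, |h| < δ ∧ f x < f (x + h)) := by
    intro δ hδ
    set h0 : ℝ := min (δ/2) (4*|c|/ν) with hh0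
    have hc0 : 0 < |c| := abs_pos.mpr hc
    have hh0pos : 0 < h0 := lt_min (by linarith) (by positivity)
    have hh0δ : |h0| < δ := by rw [abs_of_pos hh0pos]
                               exact lt_of_le_of_lt (min_le_left _ _) (by linarith)
    have hh0δ' : |(-h0)| < δ := by rwa [abs_neg]
    have hh0c : ν * h0 ≤ 4 * |c| := by
      have h1 : h0 ≤ 4*|c|/ν := min_le_right _ _
      calc ν * h0 ≤ ν * (4*|c|/ν) := by nlinarith
        _ = 4*|c| := by field_simp
    rcases hc.lt_or_gt with hneg | hpos
    · have habs : |c| = -c := abs_of_neg hneg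
      rw [habs] at hh0c
      refine ⟨⟨h0, hh0δ, ?_⟩, ⟨-h0, hh0δ', ?_⟩⟩
      · rw [hid h0]; nlinarith [pow_pos hh0pos 3, mul_pos (pow_pos hh0pos 3) (mul_pos hν hh0pos)]
      · rw [hid (-h0)]
        nlinarith [mul_pos (pow_pos hh0pos 3) (neg_pos.mpr hneg),
          mul_pos (pow_pos hh0pos 3) (mul_pos hν hh0pos)]
    · have habs : |c| = c := abs_of_pos hpos
      rw [habs] at hh0c
      refine ⟨⟨-h0, hh0δ', ?_⟩, ⟨h0, hh0δ, ?_⟩⟩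
      · rw [hid (-h0)]
        nlinarith [mul_pos (pow_pos hh0pos 3) hpos,
          mul_pos (pow_pos hh0pos 3) (mul_pos hν hh0pos)]
      · rw [hid h0]
        nlinarith [mul_pos (pow_pos hh0pos 3) hpos,
          mul_pos (pow_pos hh0pos 3) (mul_pos hν hh0pos)]
  constructor
  · intro hmin
    have hmin' : ∀ᶠ y in nhds x, f x ≤ f y := hmin
    obtain ⟨δ, hδ, hb⟩ := Metric.eventually_nhds_iff.mp hmin'
    obtain ⟨⟨h, hhδ, hlt⟩, -⟩ := key δ hδ
    have hd : dist (x + h) x < δ := by simpa [Real.dist_eq] using hhδ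
    exact absurd (hb hd) (not_le.mpr hlt)
  · intro hmax
    have hmax' : ∀ᶠ y in nhds x, f y ≤ f x := hmax
    obtain ⟨δ, hδ, hb⟩ := Metric.eventually_nhds_iff.mp hmax'
    obtain ⟨-, ⟨h, hhδ, hlt⟩⟩ := key δ hδ
    have hd : dist (x + h) x < δ := by simpa [Real.dist_eq] using hhδ
    exact absurd (hb hd) (not_le.mpr hlt)

theorem stmt_14 (μ ν α β : ℝ) (hμ : 0 < μ) (hν : 0 < ν)
    (hcase : ν * α ^ 2 > 2 * μ)
    (η ρ : ℝ) (hη : η = (ν * α ^ 2 - 2 * μ) ^ 3 / (27 * ν))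
    (hρ : ρ = -(1/3) * (μ + ν * α ^ 2))
    (hβ : β ^ 2 = η) (hβ0 : β ≠ 0)
    (p : ℝ → ℝ)
    (hp : ∀ y : ℝ, p y = (1/2) * μ * y ^ 2
      + (1/2) * ν * ((1/2) * y ^ 2 - α * y) ^ 2 - (α * μ + β) * y)
    (v₀ : ℝ) (hv₀ : v₀ = α + β / (ρ + μ)) :
    deriv p v₀ = 0 ∧ iteratedDeriv 2 p v₀ = 0 ∧
      iteratedDeriv 3 p v₀ = 3 * ν * β / (ρ + μ) ∧
      3 * ν * β / (ρ + μ) ≠ 0 ∧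
      ¬ IsLocalMin p v₀ ∧ ¬ IsLocalMax p v₀ := by
  have hν0 : ν ≠ 0 := ne_of_gt hν
  have hsneg : ρ + μ < 0 := by rw [hρ]; nlinarith
  have hs0 : ρ + μ ≠ 0 := ne_of_lt hsneg
  have hrel : ν * β ^ 2 = -(ρ + μ) ^ 3 := by
    rw [hβ, hη, hρ]; field_simp; ring
  set t : ℝ := β / (ρ + μ) with htdef
  have hβt : β = t * (ρ + μ) := by rw [htdef, div_mul_cancel₀ _ hs0]
  have hv : v₀ = α + t := hv₀
  have ht2 : ν * t ^ 2 = -(ρ + μ) := by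
    rw [htdef, div_pow, mul_div_assoc', hrel]
    rw [div_eq_iff (pow_ne_zero 2 hs0)]
    ring
  have ht0 : t ≠ 0 := by
    rw [htdef]; exact div_ne_zero hβ0 hs0
  -- rewrite p as explicit quartic
  have hpe : p = fun y : ℝ => (ν/8)*y^4 + (-(ν*α)/2)*y^3 + ((μ+ν*α^2)/2)*y^2 + (-(α*μ+β))*y := by
    funext y; rw [hp y]; ring
  have hd1 : deriv p = fun x => 4*(ν/8)*x^3 + 3*(-(ν*α)/2)*x^2 + 2*((μ+ν*α^2)/2)*x + (-(α*μ+β)) := by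
    rw [hpe, deriv_poly4]
  have hd2 : deriv (deriv p)
      = fun x => 3*(4*(ν/8))*x^2 + 2*(3*(-(ν*α)/2))*x + 2*((μ+ν*α^2)/2) := by
    rw [hd1, deriv_poly3]
  have hd3 : deriv (deriv (deriv p))
      = fun x => 2*(3*(4*(ν/8)))*x + 2*(3*(-(ν*α)/2)) := by
    rw [hd2, deriv_poly2]
  have g1 : deriv p v₀ = 0 := by
    rw [hd1, hv, hβt]
    linear_combination (t/2) * ht2 - (3*β/2/(ρ+μ)) * hρ
  have g2 : iteratedDeriv 2 p v₀ = 0 := by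
    rw [show (2:ℕ) = 0 + 1 + 1 from rfl, iteratedDeriv_succ, iteratedDeriv_succ,
      iteratedDeriv_zero, hd2, hv]
    linear_combination (3/2) * ht2 - (3/2) * hρ
  have g3 : iteratedDeriv 3 p v₀ = 3 * ν * β / (ρ + μ) := by
    rw [show (3:ℕ) = 0 + 1 + 1 + 1 from rfl, iteratedDeriv_succ, iteratedDeriv_succ,
      iteratedDeriv_succ, iteratedDeriv_zero, hd3, hv]
    rw [hβt]; field_simp; ring
  have g4 : 3 * ν * β / (ρ + μ) ≠ 0 :=
    div_ne_zero (mul_ne_zero (by positivity) hβ0) hs0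
  refine ⟨g1, g2, g3, g4, ?_⟩
  have hc0 : ν * t / 2 ≠ 0 := by
    apply div_ne_zero (mul_ne_zero hν0 ht0) two_ne_zero
  have hid : ∀ h : ℝ, p (v₀ + h) = p v₀ + h ^ 3 * (ν * t / 2 + ν / 8 * h) := by
    intro h
    rw [hp, hp, hv, hβt]
    linear_combination (h * t / 2 + 3 * h ^ 2 / 4) * ht2
      - (3*β*h/2/(ρ+μ)) * hρ - (3*h^2/4) * hρ
  exact aux_not_extr p v₀ (ν * t / 2) ν hν hc0 hid
end
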